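/- Let n ≥ 2 and let X be an n-Hausdorff space. Then X is n-H-closed if and only if every open ultrafilter 𝒰 on X is full, i.e., |a𝒰| = n−1. -/

import Mathlib

open Set Cardinal

/-- A space is `n`-Hausdorff if any `n` distinct points admit open
neighbourhoods with empty total intersection. -/
def NHausdorff (n : ℕ) (X : Type*) [TopologicalSpace X] : Prop :=
  ∀ f : Fin n ↪ X, ∃ U : Fin n → Set X,
    (∀ i, IsOpen (U i) ∧ f i ∈ U i) ∧ ⋂ i, U i = ∅

/-- An open filter on `X`: a nonempty collection of nonempty open sets, closed
under finite intersections and upward closed in the lattice of open sets. -/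
def IsOpenFilter {X : Type u} [TopologicalSpace X] (F : Set (Set X)) : Prop :=
  F.Nonempty ∧ (∀ U ∈ F, IsOpen U ∧ U.Nonempty) ∧
  (∀ U ∈ F, ∀ V ∈ F, U ∩ V ∈ F) ∧
  (∀ U ∈ F, ∀ V : Set X, IsOpen V → U ⊆ V → V ∈ F)

/-- An open ultrafilter on `X`: a maximal open filter. -/
def IsOpenUltrafilter {X : Type u} [TopologicalSpace X] (F : Set (Set X)) : Prop :=
  IsOpenFilter F ∧ ∀ G : Set (Set X), IsOpenFilter G → F ⊆ G → G = F

/-- `adh F = a F = ⋂ {cl U : U ∈ F}`. -/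
def adh {X : Type u} [TopologicalSpace X] (F : Set (Set X)) : Set X :=
  ⋂ U ∈ F, closure U

/-- An `n`-Hausdorff space is `n`-H-closed if it is closed in every
`n`-Hausdorff space in which it embeds. -/
def NHClosed (n : ℕ) (X : Type u) [TopologicalSpace X] : Prop :=
  NHausdorff n X ∧
  ∀ (Y : Type u) (_ : TopologicalSpace Y), NHausdorff n Y →
    ∀ e : X → Y, Topology.IsEmbedding e → IsClosed (Set.range e)

universe u

section Aux
variable {X : Type u} [TopologicalSpace X]

lemma of_univ_mem {F : Set (Set X)} (hF : IsOpenFilter F) : Set.univ ∈ F := by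
  obtain ⟨⟨U, hU⟩, _, _, hup⟩ := hF
  exact hup U hU Set.univ isOpen_univ (subset_univ U)

lemma of_iInter_mem {F : Set (Set X)} (hF : IsOpenFilter F) :
    ∀ (m : ℕ) (V : Fin (m+1) → Set X), (∀ i, V i ∈ F) → ⋂ i, V i ∈ F := by
  intro m
  induction m with
  | zero =>
    intro V hV
    have h0 : ⋂ i, V i = V 0 := by ext x; simp [Fin.forall_fin_one]
    rw [h0]; exact hV 0
  | succ k ih =>
    intro V hV
    have h1 : ⋂ i, V i = V 0 ∩ ⋂ i : Fin (k+1), V i.succ := by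
      ext x; simp [Fin.forall_fin_succ]
    rw [h1]
    exact hF.2.2.1 _ (hV 0) _ (ih (fun i => V i.succ) (fun i => hV i.succ))

lemma adh_anti {F G : Set (Set X)} (h : F ⊆ G) : adh G ⊆ adh F := by
  intro x hx
  simp only [adh, mem_iInter] at *
  exact fun U hU => hx U (h hU)

lemma ultra_absorb {F : Set (Set X)} (hF : IsOpenUltrafilter F) {x : X} {V : Set X}
    (hx : x ∈ adh F) (hV : IsOpen V) (hxV : x ∈ V) : V ∈ F := by
  obtain ⟨⟨hne, hop, hint, hup⟩, hmax⟩ := hF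
  set G : Set (Set X) := {W | IsOpen W ∧ ∃ U ∈ F, U ∩ V ⊆ W} with hGdef
  have hmeets : ∀ U ∈ F, (U ∩ V).Nonempty := by
    intro U hU
    have hxc : x ∈ closure U := by
      simp only [adh, mem_iInter] at hx; exact hx U hU
    have := (mem_closure_iff.mp hxc) V hV hxV
    exact this.imp fun y hy => ⟨hy.2, hy.1⟩
  have hGF : IsOpenFilter G := by
    refine ⟨⟨V, hV, ?_⟩, ?_, ?_, ?_⟩
    · obtain ⟨U, hU⟩ := hne; exact ⟨U, hU, inter_subset_right⟩
    · rintro W ⟨hW, U, hU, hsub⟩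
      exact ⟨hW, (hmeets U hU).mono hsub⟩
    · rintro W1 ⟨h1, U1, hU1, s1⟩ W2 ⟨h2, U2, hU2, s2⟩
      exact ⟨h1.inter h2, U1 ∩ U2, hint _ hU1 _ hU2,
        fun y hy => ⟨s1 ⟨hy.1.1, hy.2⟩, s2 ⟨hy.1.2, hy.2⟩⟩⟩
    · rintro W ⟨hW, U, hU, hsub⟩ W' hW' hss
      exact ⟨hW', U, hU, hsub.trans hss⟩
  have hsubG : F ⊆ G := by
    intro U hU
    exact ⟨(hop U hU).1, U, hU, inter_subset_left⟩
  have := hmax G hGF hsubG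
  rw [← this]
  obtain ⟨U, hU⟩ := hne
  exact ⟨hV, U, hU, inter_subset_right⟩

lemma exists_ultra {G : Set (Set X)} (hG : IsOpenFilter G) :
    ∃ F, IsOpenUltrafilter F ∧ G ⊆ F := by
  set S : Set (Set (Set X)) := {H | IsOpenFilter H ∧ G ⊆ H} with hS
  have hzorn := zorn_subset_nonempty S ?_ G ⟨hG, subset_rfl⟩
  · obtain ⟨M, hGM, hMmax⟩ := hzorn
    refine ⟨M, ⟨hMmax.prop.1, ?_⟩, hGM⟩
    intro H hH hMH
    exact (hMmax.eq_of_subset ⟨hH, hGM.trans hMH⟩ hMH).symm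
  · intro c hcS hchain hcne
    refine ⟨⋃₀ c, ⟨⟨?_, ?_, ?_, ?_⟩, ?_⟩, fun s hs => subset_sUnion_of_mem hs⟩
    · obtain ⟨H, hH⟩ := hcne
      obtain ⟨U, hU⟩ := (hcS hH).1.1
      exact ⟨U, H, hH, hU⟩
    · rintro U ⟨H, hH, hU⟩
      exact (hcS hH).1.2.1 U hU
    · rintro U ⟨H1, h1, hU⟩ V ⟨H2, h2, hV⟩
      rcases hchain.total h1 h2 with h | h
      · exact ⟨H2, h2, (hcS h2).1.2.2.1 U (h hU) V hV⟩
      · exact ⟨H1, h1, (hcS h1).1.2.2.1 U hU V (h hV)⟩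
    · rintro U ⟨H, hH, hU⟩ V hV hsub
      exact ⟨H, hH, (hcS hH).1.2.2.2 U hU V hV hsub⟩
    · obtain ⟨H, hH⟩ := hcne
      exact (hcS hH).2.trans (subset_sUnion_of_mem hH)

lemma embed_of_natCast_le {α : Type u} {n : ℕ} (h : (n : Cardinal) ≤ #α) :
    Nonempty (Fin n ↪ α) := by
  have h2 : #(ULift.{u} (Fin n)) = (n : Cardinal) := by simp
  rw [← h2, Cardinal.le_def] at h
  obtain ⟨f⟩ := h
  exact ⟨(Equiv.ulift.symm.toEmbedding).trans f⟩

lemma equiv_of_mk_eq_natCast {α : Type u} {n : ℕ} (h : #α = (n : Cardinal)) :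
    Nonempty (Fin n ≃ α) := by
  have h2 : #(ULift.{u} (Fin n)) = (n : Cardinal) := by simp
  rw [← h2] at h
  obtain ⟨f⟩ := Cardinal.eq.mp h
  exact ⟨Equiv.ulift.symm.trans f.symm⟩

lemma adh_card_le {n : ℕ} (hn : 2 ≤ n) (hX : NHausdorff n X) {F : Set (Set X)}
    (hF : IsOpenUltrafilter F) : #(adh F) ≤ ((n - 1 : ℕ) : Cardinal) := by
  by_contra hc
  push_neg at hc
  have h1 : ((n : ℕ) : Cardinal) ≤ #(adh F) := by
    have h2 : (n : ℕ) = (n - 1) + 1 := by omega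
    rw [h2, Nat.cast_add, Nat.cast_one, ← Cardinal.succ_natCast, Order.succ_le_iff]
    exact hc
  obtain ⟨f⟩ := embed_of_natCast_le h1
  set g : Fin n ↪ X := f.trans (Function.Embedding.subtype _) with hg
  obtain ⟨U, hU, hUe⟩ := hX g
  have hmem : ∀ i, U i ∈ F := fun i =>
    ultra_absorb hF (f i).2 (hU i).1 (hU i).2
  obtain ⟨m, hm⟩ : ∃ m, n = m + 1 := ⟨n - 1, by omega⟩
  subst hm
  have := of_iInter_mem hF.1 m U hmem
  have hne := (hF.1.2.1 _ this).2
  rw [hUe] at hne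
  exact hne.ne_empty rfl

/-- Extension topology on `Option X` determined by an open filter `F`. -/
def extTop (F : Set (Set X)) (hF : IsOpenFilter F) : TopologicalSpace (Option X) where
  IsOpen O := IsOpen (some ⁻¹' O) ∧ (none ∈ O → some ⁻¹' O ∈ F)
  isOpen_univ := ⟨by simpa using isOpen_univ, fun _ => by
    simpa using of_univ_mem hF⟩
  isOpen_inter O₁ O₂ h1 h2 := by
    refine ⟨by simpa [Set.preimage_inter] using h1.1.inter h2.1, fun hn => ?_⟩
    rw [Set.preimage_inter]
    exact hF.2.2.1 _ (h1.2 hn.1) _ (h2.2 hn.2)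
  isOpen_sUnion s hs := by
    constructor
    · rw [Set.preimage_sUnion]
      exact isOpen_biUnion fun O hO => (hs O hO).1
    · rintro ⟨O, hO, hnO⟩
      have hsub : some ⁻¹' O ⊆ some ⁻¹' ⋃₀ s := fun x hx => ⟨O, hO, hx⟩
      refine hF.2.2.2 _ ((hs O hO).2 hnO) _ ?_ hsub
      rw [Set.preimage_sUnion]
      exact isOpen_biUnion fun O hO => (hs O hO).1

lemma extTop_isOpen {F : Set (Set X)} (hF : IsOpenFilter F) (O : Set (Option X)) :
    @IsOpen _ (extTop F hF) O ↔ IsOpen (some ⁻¹' O) ∧ (none ∈ O → some ⁻¹' O ∈ F) :=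
  Iff.rfl

lemma extTop_embedding {F : Set (Set X)} (hF : IsOpenFilter F) :
    @Topology.IsEmbedding X (Option X) _ (extTop F hF) some := by
  letI := extTop F hF
  refine ⟨⟨?_⟩, Option.some_injective X⟩
  refine TopologicalSpace.ext_iff.mpr fun s => ?_
  rw [isOpen_induced_iff]
  constructor
  · intro hs
    refine ⟨some '' s, ⟨?_, ?_⟩, Set.preimage_image_eq s (Option.some_injective X)⟩
    · rw [Set.preimage_image_eq s (Option.some_injective X)]; exact hs
    · intro hn; exact absurd hn (by simp)
  · rintro ⟨t, ht, rfl⟩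
    exact ht.1

lemma extTop_nhaus {n : ℕ} (hn : 2 ≤ n) (hX : NHausdorff n X) {F : Set (Set X)}
    (hF : IsOpenFilter F)
    (hsmall : #(adh F) ≤ ((n - 2 : ℕ) : Cardinal)) :
    @NHausdorff n (Option X) (extTop F hF) := by
  letI := extTop F hF
  intro f
  by_cases hnone : ∃ i₀, f i₀ = none
  · obtain ⟨i₀, hi₀⟩ := hnone
    have hx : ∀ j : {j : Fin n // j ≠ i₀}, ∃ x : X, f j = some x := by
      rintro ⟨j, hj⟩
      rcases Option.ne_none_iff_exists.mp (fun h : f j = none =>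
        hj (f.injective (h.trans hi₀.symm))) with ⟨x, hx⟩
      exact ⟨x, hx.symm⟩
    choose x hxs using hx
    have hxinj : Function.Injective x := by
      intro a b hab
      have : f a = f b := by rw [hxs a, hxs b, hab]
      exact Subtype.ext (f.injective this)
    have hjx : ∃ j : {j : Fin n // j ≠ i₀}, x j ∉ adh F := by
      by_contra hc
      push_neg at hc
      have hemb : Function.Injective
          (fun j : ULift.{u} {j : Fin n // j ≠ i₀} => (⟨x j.down, hc j.down⟩ : adh F)) := by
        intro a b hab
        exact congrArg ULift.up (hxinj (congrArg Subtype.val hab))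
      have hle := Cardinal.mk_le_of_injective hemb
      have hcard : #(ULift.{u} {j : Fin n // j ≠ i₀}) = ((n - 1 : ℕ) : Cardinal) := by
        rw [Cardinal.mk_fintype]
        norm_cast
        simp [Fintype.card_subtype_compl]
      rw [hcard] at hle
      have := hle.trans hsmall
      rw [Nat.cast_le] at this
      omega
    obtain ⟨j₀, hj₀⟩ := hjx
    simp only [adh, mem_iInter] at hj₀
    push_neg at hj₀
    obtain ⟨U, hUF, hUx⟩ := hj₀
    have hUopen := (hF.2.1 U hUF).1
    refine ⟨fun i =>
      if i = i₀ then insert none (some '' U)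
      else if i = (j₀ : Fin n) then some '' (closure U)ᶜ else univ, fun i => ?_, ?_⟩
    · dsimp only
      by_cases h1 : i = i₀
      · subst h1
        rw [if_pos rfl]
        constructor
        · rw [extTop_isOpen]
          have hpre : some ⁻¹' (insert none (some '' U)) = U := by ext z; simp
          rw [hpre]
          exact ⟨hUopen, fun _ => hUF⟩
        · rw [hi₀]; exact mem_insert _ _
      · rw [if_neg h1]
        by_cases h2 : i = (j₀ : Fin n)
        · rw [if_pos h2]
          constructor
          · rw [extTop_isOpen]
            have hpre : some ⁻¹' (some '' (closure U)ᶜ) = (closure U)ᶜ :=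
              Set.preimage_image_eq _ (Option.some_injective X)
            rw [hpre]
            refine ⟨isClosed_closure.isOpen_compl, fun hcon => ?_⟩
            exact absurd hcon (by simp)
          · rw [h2, hxs j₀]
            exact mem_image_of_mem _ hUx
        · rw [if_neg h2]
          refine ⟨?_, mem_univ _⟩
          rw [extTop_isOpen]
          refine ⟨by simp, fun _ => ?_⟩
          rw [Set.preimage_univ]
          exact of_univ_mem hF
    · rw [eq_empty_iff_forall_notMem]
      intro y hy
      simp only [mem_iInter] at hy
      have h1 := hy i₀
      have h2 := hy (j₀ : Fin n)
      rw [if_pos rfl] at h1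
      have hne : (j₀ : Fin n) ≠ i₀ := j₀.2
      rw [if_neg hne, if_pos rfl] at h2
      obtain ⟨z, hz, hzy⟩ := h2
      rw [← hzy] at h1
      rcases h1 with h1 | h1
      · exact Option.some_ne_none _ h1
      · obtain ⟨w, hw, hws⟩ := h1
        rw [Option.some_injective X hws] at hw
        exact hz (subset_closure hw)
  · push_neg at hnone
    have hx : ∀ i, ∃ z : X, f i = some z := fun i =>
      (Option.ne_none_iff_exists.mp (hnone i)).imp fun z hz => hz.symm
    choose x hxs using hx
    have hxinj : Function.Injective x := by
      intro a b hab
      apply f.injective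
      rw [hxs a, hxs b, hab]
    obtain ⟨U, hU, hUe⟩ := hX ⟨x, hxinj⟩
    refine ⟨fun i => some '' U i, fun i => ?_, ?_⟩
    · constructor
      · rw [extTop_isOpen]
        rw [Set.preimage_image_eq _ (Option.some_injective X)]
        exact ⟨(hU i).1, fun hcon => absurd hcon (by simp)⟩
      · rw [hxs i]
        exact mem_image_of_mem _ (hU i).2
    · rw [eq_empty_iff_forall_notMem]
      intro y hy
      rw [mem_iInter] at hy
      obtain ⟨z, hz, hzy⟩ := hy ⟨0, by omega⟩
      have hz_all : ∀ i, z ∈ U i := by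
        intro i
        obtain ⟨w, hw, hwy⟩ := hy i
        rwa [show w = z from Option.some_injective X (hwy.trans hzy.symm)] at hw
      have : z ∈ ⋂ i, U i := mem_iInter.mpr hz_all
      rw [hUe] at this
      exact this

lemma forward_dir {n : ℕ} (hn : 2 ≤ n) (hX : NHausdorff n X)
    (hcl : NHClosed n X) {F : Set (Set X)} (hF : IsOpenUltrafilter F) :
    #(adh F) = ((n - 1 : ℕ) : Cardinal) := by
  by_contra hne
  have hlt : #(adh F) < ((n - 1 : ℕ) : Cardinal) :=
    lt_of_le_of_ne (adh_card_le hn hX hF) hne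
  have hfin : #(adh F) < Cardinal.aleph0 := hlt.trans (Cardinal.nat_lt_aleph0 _)
  obtain ⟨m, hm⟩ := Cardinal.lt_aleph0.mp hfin
  have hm2 : m < n - 1 := by
    rw [hm, Nat.cast_lt] at hlt; exact hlt
  have hsmall : #(adh F) ≤ ((n - 2 : ℕ) : Cardinal) := by
    rw [hm, Nat.cast_le]; omega
  have hns := extTop_nhaus hn hX hF.1 hsmall
  have hclosed := hcl.2 (Option X) (extTop F hF.1) hns some (extTop_embedding hF.1)
  letI := extTop F hF.1
  have hopen : IsOpen (Set.range (some : X → Option X))ᶜ := hclosed.isOpen_compl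
  have hcompl : (Set.range (some : X → Option X))ᶜ = {none} := by
    ext o; cases o <;> simp
  rw [hcompl, extTop_isOpen] at hopen
  have h0 : (some : X → Option X) ⁻¹' {none} = (∅ : Set X) := by
    ext z; simp
  have := hopen.2 rfl
  rw [h0] at this
  exact (hF.1.2.1 ∅ this).2.ne_empty rfl
lemma backward_dir {n : ℕ} (hn : 2 ≤ n) (hX : NHausdorff n X)
    (h : ∀ F : Set (Set X), IsOpenUltrafilter F → #(adh F) = ((n - 1 : ℕ) : Cardinal)) :
    NHClosed n X := by
  refine ⟨hX, ?_⟩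
  intro Y tY hY e he
  apply isClosed_of_closure_subset
  intro y hy
  by_contra hynot
  set G : Set (Set X) := {U | IsOpen U ∧ ∃ W : Set Y, IsOpen W ∧ y ∈ W ∧ e ⁻¹' W ⊆ U} with hGdef
  have hG : IsOpenFilter G := by
    refine ⟨⟨univ, isOpen_univ, univ, isOpen_univ, mem_univ y, subset_univ _⟩, ?_, ?_, ?_⟩
    · rintro U ⟨hU, W, hW, hyW, hsub⟩
      refine ⟨hU, ?_⟩
      obtain ⟨z, hz1, x, hx⟩ := mem_closure_iff.mp hy W hW hyW
      exact ⟨x, hsub (by rw [Set.mem_preimage, hx]; exact hz1)⟩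
    · rintro U1 ⟨h1, W1, hW1, hy1, s1⟩ U2 ⟨h2, W2, hW2, hy2, s2⟩
      exact ⟨h1.inter h2, W1 ∩ W2, hW1.inter hW2, ⟨hy1, hy2⟩,
        fun x hx => ⟨s1 hx.1, s2 hx.2⟩⟩
    · rintro U ⟨hU, W, hW, hyW, hsub⟩ V hV hUV
      exact ⟨hV, W, hW, hyW, hsub.trans hUV⟩
  obtain ⟨F, hF, hGF⟩ := exists_ultra hG
  obtain ⟨g⟩ := equiv_of_mk_eq_natCast (h F hF)
  set f : Fin n → Y := fun i =>
    if hi : (i : ℕ) < n - 1 then e ((g ⟨(i : ℕ), hi⟩ : adh F) : X) else y with hfdef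
  have hfinj : Function.Injective f := by
    intro a b hab
    simp only [hfdef] at hab
    split_ifs at hab with h1 h2 h2
    · have h3 : ((g ⟨(a : ℕ), h1⟩ : adh F) : X) = ((g ⟨(b : ℕ), h2⟩ : adh F) : X) :=
        he.injective hab
    -- from coe equality to Fin equality
      have h4 : g ⟨(a : ℕ), h1⟩ = g ⟨(b : ℕ), h2⟩ := Subtype.ext h3
      have h5 := g.injective h4
      have h6 : (a : ℕ) = (b : ℕ) := congrArg (Fin.val : Fin (n-1) → ℕ) h5
      exact Fin.ext h6
    · exact absurd ⟨_, hab⟩ hynot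
    · exact absurd ⟨_, hab.symm⟩ hynot
    · have : (a : ℕ) = (b : ℕ) := by omega
      exact Fin.ext this
  obtain ⟨V, hV, hVe⟩ := hY ⟨f, hfinj⟩
  have hmem : ∀ i, e ⁻¹' V i ∈ F := by
    intro i
    by_cases hi : (i : ℕ) < n - 1
    · have hfi : f i = e ((g ⟨(i : ℕ), hi⟩ : adh F) : X) := by
        simp only [hfdef, dif_pos hi]
      have hpV : ((g ⟨(i : ℕ), hi⟩ : adh F) : X) ∈ e ⁻¹' V i := by
        rw [Set.mem_preimage, ← hfi]
        exact (hV i).2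
      exact ultra_absorb hF (g ⟨(i : ℕ), hi⟩).2 ((hV i).1.preimage he.continuous) hpV
    · have hfi : f i = y := by simp only [hfdef, dif_neg hi]
      apply hGF
      refine ⟨(hV i).1.preimage he.continuous, V i, (hV i).1, ?_, subset_rfl⟩
      rw [← hfi]; exact (hV i).2
  obtain ⟨m, hm⟩ : ∃ m, n = m + 1 := ⟨n - 1, by omega⟩
  subst hm
  have hiF := of_iInter_mem hF.1 m (fun i => e ⁻¹' V i) hmem
  obtain ⟨x, hx⟩ := (hF.1.2.1 _ hiF).2
  have : e x ∈ ⋂ i, V i := by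
    rw [mem_iInter]
    intro i
    exact mem_iInter.mp hx i
  rw [hVe] at this
  exact this

end Aux

theorem stmt16 (n : ℕ) (hn : 2 ≤ n) (X : Type u) [TopologicalSpace X]
    (hX : NHausdorff n X) :
    NHClosed n X ↔
      ∀ F : Set (Set X), IsOpenUltrafilter F → #(adh F) = (n - 1 : ℕ) := by
  constructor
  · intro hcl F hF
    exact forward_dir hn hX hcl hF
  · intro h
    exact backward_dir hn hX h
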